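/- Let G = ⟨X⟩ be a group, H a normal subgroup of G, and Ḡ = G/H generated by the image X̄ of X. Then pw(Ḡ, X̄) ≤ pw(G, X) ≤ pw(Ḡ, X̄) + pw(H, X), where pw(H, X) denotes the supremum over h ∈ H of the minimal number of palindromes in X^{±1} whose product is h. -/
import Mathlib


/-- An element `g` of a group `G` is a palindrome with respect to a generating set `X`
if it is represented by a word in the alphabet `X^{±1}` that equals its own reversal. -/
def IsPalindrome {G : Type*} [Group G] (X : Set G) (g : G) : Prop :=
  ∃ w : List G, (∀ x ∈ w, x ∈ X ∨ x⁻¹ ∈ X) ∧ w.reverse = w ∧ w.prod = g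

/-- `g` is a product of `k` palindromes with respect to `X`. -/
def IsProdOfPalindromes {G : Type*} [Group G] (X : Set G) (k : ℕ) (g : G) : Prop :=
  ∃ l : List G, l.length = k ∧ (∀ p ∈ l, IsPalindrome X p) ∧ l.prod = g

/-- The palindromic length of `g` with respect to `X`, as an extended natural number. -/
noncomputable def palLength {G : Type*} [Group G] (X : Set G) (g : G) : ℕ∞ :=
  sInf ((fun k : ℕ => (k : ℕ∞)) '' {k : ℕ | IsProdOfPalindromes X k g})

/-- The palindromic width of `G` with respect to `X`. -/
noncomputable def palWidth (G : Type*) [Group G] (X : Set G) : ℕ∞ :=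
  ⨆ g : G, palLength X g

/-- The palindromic width of a subgroup `H` of `G` with respect to palindromes of `G` in `X`. -/
noncomputable def palWidthOn {G : Type*} [Group G] (H : Subgroup G) (X : Set G) : ℕ∞ :=
  ⨆ h : H, palLength X (h : G)

lemma isPalindrome_single {G : Type*} [Group G] {X : Set G} {x : G}
    (hx : x ∈ X ∨ x⁻¹ ∈ X) : IsPalindrome X x :=
  ⟨[x], by simpa using hx, rfl, by simp⟩

lemma IsPalindrome.inv {G : Type*} [Group G] {X : Set G} {p : G}
    (h : IsPalindrome X p) : IsPalindrome X p⁻¹ := by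
  obtain ⟨w, hmem, hrev, hprod⟩ := h
  refine ⟨w.map (·⁻¹), ?_, ?_, ?_⟩
  · intro x hx
    simp only [List.mem_map] at hx
    obtain ⟨y, hy, rfl⟩ := hx
    rcases hmem y hy with h | h
    · exact Or.inr (by simpa using h)
    · exact Or.inl h
  · rw [← List.map_reverse, hrev]
  · rw [← hprod, List.prod_inv_reverse, ← List.map_reverse, hrev]

lemma IsProdOfPalindromes.mul {G : Type*} [Group G] {X : Set G} {k m : ℕ} {a b : G}
    (ha : IsProdOfPalindromes X k a) (hb : IsProdOfPalindromes X m b) :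
    IsProdOfPalindromes X (k + m) (a * b) := by
  obtain ⟨l, hl, hp, hpr⟩ := ha
  obtain ⟨l', hl', hp', hpr'⟩ := hb
  refine ⟨l ++ l', by simp [hl, hl'], ?_, by simp [hpr, hpr']⟩
  intro p hp''
  rcases List.mem_append.mp hp'' with h | h
  · exact hp p h
  · exact hp' p h

lemma exists_isProd {G : Type*} [Group G] {X : Set G} (hX : Subgroup.closure X = ⊤) (g : G) :
    ∃ k, IsProdOfPalindromes X k g := by
  have hg : g ∈ Subgroup.closure X := hX ▸ Subgroup.mem_top g
  induction hg using Subgroup.closure_induction with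
  | mem x hx =>
    exact ⟨1, [x], rfl, by
      intro p hp
      simp only [List.mem_singleton] at hp
      subst hp
      exact isPalindrome_single (Or.inl hx), by simp⟩
  | one => exact ⟨0, [], rfl, by simp, rfl⟩
  | mul a b _ _ ha hb =>
    obtain ⟨k, hk⟩ := ha
    obtain ⟨m, hm⟩ := hb
    exact ⟨k + m, hk.mul hm⟩
  | inv a _ ha =>
    obtain ⟨k, l, hl, hp, hpr⟩ := ha
    refine ⟨k, (l.map (·⁻¹)).reverse, by simp [hl], ?_, by rw [← hpr, List.prod_inv_reverse]⟩
    intro p hp'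
    simp only [List.mem_reverse, List.mem_map] at hp'
    obtain ⟨q, hq, rfl⟩ := hp'
    exact (hp q hq).inv

lemma palLength_le {G : Type*} [Group G] {X : Set G} {k : ℕ} {g : G}
    (h : IsProdOfPalindromes X k g) : palLength X g ≤ k :=
  sInf_le ⟨k, h, rfl⟩

lemma palLength_exists {G : Type*} [Group G] {X : Set G} {g : G}
    (hne : ∃ k, IsProdOfPalindromes X k g) :
    ∃ k, IsProdOfPalindromes X k g ∧ palLength X g = (k : ℕ∞) := by
  obtain ⟨k0, hk0⟩ := hne
  have h : ((fun k : ℕ => (k : ℕ∞)) '' {k : ℕ | IsProdOfPalindromes X k g}).Nonempty :=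
    ⟨k0, k0, hk0, rfl⟩
  obtain ⟨k, hk, hk2⟩ := csInf_mem h
  exact ⟨k, hk, hk2.symm⟩

lemma IsPalindrome.map {G H : Type*} [Group G] [Group H] (f : G →* H) {X : Set G} {p : G}
    (h : IsPalindrome X p) : IsPalindrome (f '' X) (f p) := by
  obtain ⟨w, hmem, hrev, hprod⟩ := h
  refine ⟨w.map f, ?_, by rw [← List.map_reverse, hrev], by rw [← hprod, map_list_prod]⟩
  intro x hx
  simp only [List.mem_map] at hx
  obtain ⟨y, hy, rfl⟩ := hx
  rcases hmem y hy with h | h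
  · exact Or.inl ⟨y, h, rfl⟩
  · exact Or.inr ⟨y⁻¹, h, map_inv f y⟩

lemma IsProdOfPalindromes.map {G H : Type*} [Group G] [Group H] (f : G →* H) {X : Set G}
    {k : ℕ} {g : G} (h : IsProdOfPalindromes X k g) :
    IsProdOfPalindromes (f '' X) k (f g) := by
  obtain ⟨l, hl, hp, hpr⟩ := h
  refine ⟨l.map f, by simp [hl], ?_, by rw [← hpr, map_list_prod]⟩
  intro p hp'
  simp only [List.mem_map] at hp'
  obtain ⟨q, hq, rfl⟩ := hp'
  exact (hp q hq).map f

lemma palindrome_lift {G : Type*} [Group G] (H : Subgroup G) [H.Normal] (X : Set G)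
    {p' : G ⧸ H} (hp : IsPalindrome ((QuotientGroup.mk' H) '' X) p') :
    ∃ p : G, IsPalindrome X p ∧ QuotientGroup.mk' H p = p' := by
  set f := QuotientGroup.mk' H
  have hlift : ∀ y : G ⧸ H, ∃ z : G,
      (y ∈ f '' X ∨ y⁻¹ ∈ f '' X) → ((z ∈ X ∨ z⁻¹ ∈ X) ∧ f z = y) := by
    intro y
    by_cases h1 : y ∈ f '' X
    · obtain ⟨x, hx, hxy⟩ := h1
      exact ⟨x, fun _ => ⟨Or.inl hx, hxy⟩⟩
    · by_cases h2 : y⁻¹ ∈ f '' X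
      · obtain ⟨x, hx, hxy⟩ := h2
        refine ⟨x⁻¹, fun _ => ⟨Or.inr (by simpa using hx), ?_⟩⟩
        rw [map_inv, hxy, inv_inv]
      · exact ⟨1, fun h => absurd h (by tauto)⟩
  choose L hL using hlift
  obtain ⟨w, hmem, hrev, hprod⟩ := hp
  refine ⟨(w.map L).prod, ⟨w.map L, ?_, ?_, rfl⟩, ?_⟩
  · intro x hx
    simp only [List.mem_map] at hx
    obtain ⟨y, hy, rfl⟩ := hx
    exact (hL y (hmem y hy)).1
  · rw [← List.map_reverse, hrev]
  · rw [map_list_prod, List.map_map, ← hprod]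
    congr 1
    conv_rhs => rw [← List.map_id w]
    refine List.map_congr_left ?_
    intro y hy
    exact (hL y (hmem y hy)).2

lemma prodPal_lift {G : Type*} [Group G] (H : Subgroup G) [H.Normal] (X : Set G)
    {k : ℕ} {g' : G ⧸ H} (h : IsProdOfPalindromes ((QuotientGroup.mk' H) '' X) k g') :
    ∃ g : G, IsProdOfPalindromes X k g ∧ QuotientGroup.mk' H g = g' := by
  set f := QuotientGroup.mk' H
  have hlift : ∀ p' : G ⧸ H, ∃ p : G,
      IsPalindrome (f '' X) p' → (IsPalindrome X p ∧ f p = p') := by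
    intro p'
    by_cases hp : IsPalindrome (f '' X) p'
    · obtain ⟨p, h1, h2⟩ := palindrome_lift H X hp
      exact ⟨p, fun _ => ⟨h1, h2⟩⟩
    · exact ⟨1, fun h => absurd h hp⟩
  choose P hP using hlift
  obtain ⟨l, hl, hp, hpr⟩ := h
  refine ⟨(l.map P).prod, ⟨l.map P, by simp [hl], ?_, rfl⟩, ?_⟩
  · intro p hp'
    simp only [List.mem_map] at hp'
    obtain ⟨q, hq, rfl⟩ := hp'
    exact (hP q (hp q hq)).1
  · rw [map_list_prod, List.map_map, ← hpr]
    congr 1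
    conv_rhs => rw [← List.map_id l]
    refine List.map_congr_left ?_
    intro q hq
    exact (hP q (hp q hq)).2

theorem palWidth_quotient_bounds {G : Type*} [Group G] (X : Set G)
    (hX : Subgroup.closure X = ⊤) (H : Subgroup G) [H.Normal] :
    palWidth (G ⧸ H) ((QuotientGroup.mk' H) '' X) ≤ palWidth G X ∧
    palWidth G X ≤ palWidth (G ⧸ H) ((QuotientGroup.mk' H) '' X) + palWidthOn H X := by
  set f := QuotientGroup.mk' H
  constructor
  · apply iSup_le
    intro g'
    obtain ⟨g, rfl⟩ := QuotientGroup.mk'_surjective H g'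
    refine le_trans ?_ (le_iSup (fun g : G => palLength X g) g)
    apply le_sInf
    rintro n ⟨k, hk, rfl⟩
    exact palLength_le (hk.map f)
  · apply iSup_le
    intro g
    have hX' : Subgroup.closure (f '' X) = ⊤ := by
      rw [← MonoidHom.map_closure, hX]
      exact Subgroup.map_top_of_surjective f (QuotientGroup.mk'_surjective H)
    obtain ⟨k, hk, hkeq⟩ := palLength_exists (exists_isProd hX' (f g))
    obtain ⟨g', hg', hfg⟩ := prodPal_lift H X hk
    have hH : g'⁻¹ * g ∈ H := by
      rwa [← QuotientGroup.eq, ← QuotientGroup.mk'_apply, ← QuotientGroup.mk'_apply]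
    obtain ⟨m, hm, hmeq⟩ := palLength_exists (exists_isProd hX (g'⁻¹ * g))
    have hprod : IsProdOfPalindromes X (k + m) g := by
      have := hg'.mul hm
      rwa [mul_inv_cancel_left] at this
    calc palLength X g ≤ ((k + m : ℕ) : ℕ∞) := palLength_le hprod
      _ = (k : ℕ∞) + (m : ℕ∞) := by push_cast; rfl
      _ ≤ palWidth (G ⧸ H) (f '' X) + palWidthOn H X := by
          refine add_le_add ?_ ?_
          · rw [← hkeq]
            exact le_iSup (fun g' : G ⧸ H => palLength (f '' X) g') (f g)
          · rw [← hmeq]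
            exact le_iSup (fun h : H => palLength X (h : G)) ⟨g'⁻¹ * g, hH⟩
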